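/- arXiv:1110.2716 — 2 statements merged into one kernel-verified Lean document; each statement's English description precedes it below -/
import Mathlib

section
/- Let M̂ be the collection of subsets S of N such that for every pair a, b ∈ N with d(a,b) = d_t(a,b) = 3, at least one of a, b is not in S. Then the prime ideals minimal over Ĵ^{⟨t⟩} are exactly the minimal ideals among {(x_a : a ∉ S) : S ∈ M̂}. -/
open MvPolynomial Finset

/-- The index set `N = [r 1] × ⋯ × [r n]`, realized as dependent functions. -/
abbrev Idx {n : ℕ} (r : Fin n → ℕ) := ∀ i, Fin (r i)

variable {n : ℕ} {r : Fin n → ℕ}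

/-- The switch `s(K,a,b)`: `b i` in the components of `K`, `a i` elsewhere. -/
def sw (K : Finset (Fin n)) (a b : Idx r) : Idx r := fun i => if i ∈ K then b i else a i

/-- The distance `d(a,b) = #{i : a i ≠ b i}`. -/
def hdist (a b : Idx r) : ℕ := (univ.filter fun i => a i ≠ b i).card

/-- The truncated distance `d_t(a,b) = #{i ∈ [t] : a i ≠ b i}`. -/
def hdistT (t : ℕ) (a b : Idx r) : ℕ :=
  (univ.filter fun i : Fin n => (i : ℕ) < t ∧ a i ≠ b i).card

/-- `c : ℕ → N` is a path of length `m` from `a` to `b` inside `S`: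
consecutive elements differ in exactly one component. -/
def IsPath (S : Set (Idx r)) (a b : Idx r) (m : ℕ) (c : ℕ → Idx r) : Prop :=
  c 0 = a ∧ c m = b ∧ (∀ j ≤ m, c j ∈ S) ∧ ∀ j < m, hdist (c j) (c (j + 1)) = 1

/-- `a` and `b` are connected in `S`. -/
def Connected (S : Set (Idx r)) (a b : Idx r) : Prop := ∃ m c, IsPath S a b m c

/-- The minimal path length `pl_S(a,b)`. -/
noncomputable def pl (S : Set (Idx r)) (a b : Idx r) : ℕ :=
  sInf {m | ∃ c, IsPath S a b m c}

/-- `S` is `t`-switchable. -/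
def Switchable (t : ℕ) (S : Set (Idx r)) : Prop :=
  ∀ a ∈ S, ∀ b ∈ S, hdist a b = 2 → ∀ i : Fin n, (i : ℕ) < t →
    sw {i} a b ∈ S ∧ sw {i} b a ∈ S

/-- `S` is `t`-signed: `t`-switchable, and each connectedness class satisfies one of:
constant first `t` coordinates, pairwise distance at most 1, or path-independent
parity of path lengths. -/
def Signed (t : ℕ) (S : Set (Idx r)) : Prop :=
  Switchable t S ∧
  ∀ a ∈ S,
    (∀ b c, Connected S a b → Connected S a c → ∀ i : Fin n, (i : ℕ) < t → b i = c i) ∨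
    (∀ b c, Connected S a b → Connected S a c → hdist b c ≤ 1) ∨
    (∀ b c, Connected S a b → Connected S a c →
      ∀ m m' p p', IsPath S b c m p → IsPath S b c m' p' → m % 2 = m' % 2)

variable (k : Type*) [Field k]

/-- The generalized determinant `f_{i,a,b}`. -/
noncomputable def fdet (i : Fin n) (a b : Idx r) : MvPolynomial (Idx r) k :=
  X a * X b - X (sw {i} a b) * X (sw {i} b a)

/-- The generalized permanent `g_{i,a,b}`. -/
noncomputable def gperm (i : Fin n) (a b : Idx r) : MvPolynomial (Idx r) k :=
  X a * X b + X (sw {i} a b) * X (sw {i} b a)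

/-- The binomial `h_{S,K,a,b}`. -/
noncomputable def hbin (S : Set (Idx r)) (K : Finset (Fin n)) (a b : Idx r) :
    MvPolynomial (Idx r) k :=
  X a * X b - (-1) ^ (K.card * (pl S a b - 1)) * (X (sw K a b) * X (sw K b a))

/-- The slice permanental ideal `J^⟨t⟩`. -/
noncomputable def Jt (t : ℕ) : Ideal (MvPolynomial (Idx r) k) :=
  Ideal.span {p | ∃ (a b : Idx r) (i : Fin n),
    hdist a b = 2 ∧ (i : ℕ) < t ∧ a i ≠ b i ∧ p = gperm k i a b}

/-- The ideal `J̃^⟨t⟩_S`. -/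
noncomputable def Jtilde (t : ℕ) (S : Set (Idx r)) : Ideal (MvPolynomial (Idx r) k) :=
  Ideal.span {p | ∃ (a b : Idx r) (i : Fin n),
    Connected S a b ∧ (i : ℕ) < t ∧ a i ≠ b i ∧ p = hbin k S {i} a b}

/-- The ideal `Var^⟨t⟩_S = (x_a : a ∉ S)`. -/
noncomputable def VarIdeal (S : Set (Idx r)) : Ideal (MvPolynomial (Idx r) k) :=
  Ideal.span {p | ∃ a ∉ S, p = X a}

/-- The ideal `Q^⟨t⟩_S = Var^⟨t⟩_S + J̃^⟨t⟩_S`. -/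
noncomputable def Qideal (t : ℕ) (S : Set (Idx r)) : Ideal (MvPolynomial (Idx r) k) :=
  VarIdeal k S + Jtilde k t S

/-- The ideal `Ĵ^⟨t⟩`. -/
noncomputable def Jhat (t : ℕ) : Ideal (MvPolynomial (Idx r) k) :=
  Ideal.span {p | ∃ (a b : Idx r) (i : Fin n),
    hdist a b = 3 ∧ hdistT t a b = 3 ∧ (i : ℕ) < t ∧ a i ≠ b i ∧ p = gperm k i a b}

/-- `S` is a maximal `t`-signed set. -/
noncomputable def MaximalSigned (t : ℕ) (S : Set (Idx r)) : Prop :=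
  Signed t S ∧ ∀ T : Set (Idx r), Signed t T → S ⊆ T → Qideal k t S ≤ Qideal k t T


section Aux
attribute [local instance] Classical.propDecidable
variable {n : ℕ} {r : Fin n → ℕ} (k : Type*) [Field k]

lemma varIdeal_eq (S : Set (Idx r)) :
    VarIdeal k S = Ideal.span (MvPolynomial.X '' Sᶜ : Set (MvPolynomial (Idx r) k)) := by
  unfold VarIdeal
  congr 1
  ext p
  simp [Set.mem_image, eq_comm]

/-- the retraction killing variables outside S -/
noncomputable def kil (S : Set (Idx r)) : MvPolynomial (Idx r) k →ₐ[k] MvPolynomial (Idx r) k :=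
  aeval (fun a => if a ∈ S then X a else 0)

lemma kil_monomial (S : Set (Idx r)) (m : Idx r →₀ ℕ) (c : k) :
    kil k S (monomial m c) =
      if (∀ a ∈ m.support, a ∈ S) then monomial m c else 0 := by
  rw [kil, aeval_monomial]
  split_ifs with h
  · rw [monomial_eq]
    congr 1
    apply Finsupp.prod_congr
    intro a ha
    rw [if_pos (h a ha)]
  · push_neg at h
    obtain ⟨a, ha, haS⟩ := h
    rw [Finsupp.prod]
    rw [Finset.prod_eq_zero ha]
    · ring
    · rw [if_neg haS, zero_pow]
      simpa using ha

lemma coeff_kil (S : Set (Idx r)) (x : MvPolynomial (Idx r) k) (m : Idx r →₀ ℕ)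
    (hm : ∀ a ∈ m.support, a ∈ S) : coeff m (kil k S x) = coeff m x := by
  conv_lhs => rw [x.as_sum, map_sum]
  rw [coeff_sum]
  conv_rhs => rw [x.as_sum, coeff_sum]
  apply Finset.sum_congr rfl
  intro m' _
  rw [kil_monomial]
  split_ifs with h
  · rfl
  · rw [coeff_zero, coeff_monomial]
    split_ifs with h2
    · subst h2; exact absurd hm h
    · rfl

lemma varIdeal_eq_ker (S : Set (Idx r)) :
    VarIdeal k S = RingHom.ker (kil k S : MvPolynomial (Idx r) k →+* MvPolynomial (Idx r) k) := by
  apply le_antisymm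
  · rw [VarIdeal, Ideal.span_le]
    rintro p ⟨a, haS, rfl⟩
    simp only [SetLike.mem_coe, RingHom.mem_ker]
    show kil k S (X a) = 0
    rw [kil, aeval_X, if_neg haS]
  · intro x hx
    rw [RingHom.mem_ker] at hx
    rw [varIdeal_eq, mem_ideal_span_X_image]
    intro m hm
    by_contra hc
    push_neg at hc
    have hsub : ∀ a ∈ m.support, a ∈ S := by
      intro a ha
      by_contra haS
      exact (Finsupp.mem_support_iff.mp ha) (hc a haS)
    have := coeff_kil k S x m hsub
    rw [show (kil k S) x = 0 from hx, coeff_zero] at this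
    exact (mem_support_iff.mp hm) this.symm

lemma varIdeal_isPrime (S : Set (Idx r)) : (VarIdeal k S).IsPrime := by
  rw [varIdeal_eq_ker]
  exact RingHom.ker_isPrime _

lemma X_mem_varIdeal_iff (S : Set (Idx r)) (a : Idx r) :
    X a ∈ VarIdeal k S ↔ a ∉ S := by
  constructor
  · intro h
    rw [varIdeal_eq, mem_ideal_span_X_image] at h
    obtain ⟨i, hi, hne⟩ := h (Finsupp.single a 1) (by simp [support_X])
    rw [Finsupp.single_apply_ne_zero] at hne
    rwa [← hne.1]
  · intro h
    exact Ideal.subset_span ⟨a, h, rfl⟩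

lemma sw_ne_iff (i : Fin n) (a b : Idx r) (j : Fin n) :
    sw {i} a b j ≠ sw {i} b a j ↔ a j ≠ b j := by
  by_cases h : j = i
  · subst h; simp [sw, ne_comm]
  · simp [sw, h]

lemma hdist_sw (i : Fin n) (a b : Idx r) : hdist (sw {i} a b) (sw {i} b a) = hdist a b := by
  unfold hdist
  congr 1
  apply Finset.filter_congr
  intro j _
  simp [sw_ne_iff]

lemma hdistT_sw (t : ℕ) (i : Fin n) (a b : Idx r) :
    hdistT t (sw {i} a b) (sw {i} b a) = hdistT t a b := by
  unfold hdistT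
  congr 1
  apply Finset.filter_congr
  intro j _
  constructor
  · rintro ⟨h1, h2⟩; exact ⟨h1, (sw_ne_iff i a b j).mp h2⟩
  · rintro ⟨h1, h2⟩; exact ⟨h1, (sw_ne_iff i a b j).mpr h2⟩

lemma mul_mem_Jhat (h2 : (2 : k) ≠ 0) (t : ℕ) (a b : Idx r)
    (hd : hdist a b = 3) (hdT : hdistT t a b = 3) : X a * X b ∈ Jhat k t := by
  classical
  -- the two filter sets coincide
  have hsub : (univ.filter fun i : Fin n => (i : ℕ) < t ∧ a i ≠ b i) ⊆
      (univ.filter fun i : Fin n => a i ≠ b i) := by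
    intro i hi
    simp only [mem_filter] at hi ⊢
    exact ⟨hi.1, hi.2.2⟩
  have hset : (univ.filter fun i : Fin n => (i : ℕ) < t ∧ a i ≠ b i) =
      (univ.filter fun i : Fin n => a i ≠ b i) :=
    Finset.eq_of_subset_of_card_le hsub (le_of_eq (hd.trans hdT.symm))
  have hlt : ∀ i : Fin n, a i ≠ b i → (i : ℕ) < t := by
    intro i hi
    have : i ∈ (univ.filter fun i : Fin n => a i ≠ b i) := by simp [hi]
    rw [← hset, mem_filter] at this
    exact this.2.1
  obtain ⟨i, j, l, hij, hil, hjl, hD⟩ := Finset.card_eq_three.mp hd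
  have hmem : ∀ m : Fin n, a m ≠ b m ↔ (m = i ∨ m = j ∨ m = l) := by
    intro m
    constructor
    · intro hm
      have : m ∈ ({i, j, l} : Finset (Fin n)) := by rw [← hD]; simp [hm]
      simpa using this
    · intro hm
      have : m ∈ ({i, j, l} : Finset (Fin n)) := by simpa using hm
      rw [← hD, mem_filter] at this
      exact this.2
  have hai : a i ≠ b i := (hmem i).mpr (Or.inl rfl)
  have haj : a j ≠ b j := (hmem j).mpr (Or.inr (Or.inl rfl))
  have hal : a l ≠ b l := (hmem l).mpr (Or.inr (Or.inr rfl))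
  set a1 := sw {i} a b with ha1
  set b1 := sw {i} b a with hb1
  set a2 := sw {j} a1 b1 with ha2
  set b2 := sw {j} b1 a1 with hb2
  have hd1 : hdist a1 b1 = 3 := by rw [ha1, hb1, hdist_sw, hd]
  have hdT1 : hdistT t a1 b1 = 3 := by rw [ha1, hb1, hdistT_sw, hdT]
  have hd2 : hdist a2 b2 = 3 := by rw [ha2, hb2, hdist_sw, hd1]
  have hdT2 : hdistT t a2 b2 = 3 := by rw [ha2, hb2, hdistT_sw, hdT1]
  have h1j : a1 j ≠ b1 j := (sw_ne_iff i a b j).mpr haj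
  have h2l : a2 l ≠ b2 l := (sw_ne_iff j a1 b1 l).mpr ((sw_ne_iff i a b l).mpr hal)
  have hswb : sw {l} a2 b2 = b := by
    funext m
    by_cases hmi : m = i
    · subst hmi; simp [sw, a2, b2, a1, b1, hij, Ne.symm hij, hil, Ne.symm hil]
    by_cases hmj : m = j
    · subst hmj; simp [sw, a2, b2, a1, b1, hjl, Ne.symm hjl, hmi, Ne.symm hij]
    by_cases hml : m = l
    · subst hml; simp [sw, a2, b2, a1, b1, Ne.symm hil, Ne.symm hjl, hil, hjl]
    · have : a m = b m := by
        by_contra hc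
        rcases (hmem m).mp hc with h | h | h <;> [exact hmi h; exact hmj h; exact hml h]
      simp [sw, hmi, hmj, hml, this, a2, b2, a1, b1]
  have hswa : sw {l} b2 a2 = a := by
    funext m
    by_cases hmi : m = i
    · subst hmi; simp [sw, a2, b2, a1, b1, hij, Ne.symm hij, hil, Ne.symm hil]
    by_cases hmj : m = j
    · subst hmj; simp [sw, a2, b2, a1, b1, hjl, Ne.symm hjl, hmi, Ne.symm hij]
    by_cases hml : m = l
    · subst hml; simp [sw, a2, b2, a1, b1, Ne.symm hil, Ne.symm hjl, hil, hjl]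
    · have : a m = b m := by
        by_contra hc
        rcases (hmem m).mp hc with h | h | h <;> [exact hmi h; exact hmj h; exact hml h]
      simp [sw, hmi, hmj, hml, this, a2, b2, a1, b1]
  have hg1 : gperm k i a b ∈ Jhat k t :=
    Ideal.subset_span ⟨a, b, i, hd, hdT, hlt i hai, hai, rfl⟩
  have hg2 : gperm k j a1 b1 ∈ Jhat k t := by
    refine Ideal.subset_span ⟨a1, b1, j, hd1, hdT1, hlt j haj, h1j, rfl⟩
  have hg3 : gperm k l a2 b2 ∈ Jhat k t := by
    refine Ideal.subset_span ⟨a2, b2, l, hd2, hdT2, hlt l hal, h2l, rfl⟩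
  have hsum : gperm k i a b - gperm k j a1 b1 + gperm k l a2 b2
      = C (2 : k) * (X a * X b) := by
    unfold gperm
    rw [← ha1, ← hb1, ← ha2, ← hb2, hswb, hswa]
    rw [map_ofNat]
    ring
  have hmem2 : C (2 : k) * (X a * X b) ∈ Jhat k t := by
    rw [← hsum]
    exact Ideal.add_mem _ (Ideal.sub_mem _ hg1 hg2) hg3
  have := Ideal.mul_mem_left (Jhat k t) (C ((2 : k)⁻¹)) hmem2
  rwa [← mul_assoc, ← map_mul, inv_mul_cancel₀ h2, map_one, one_mul] at this

def IsCover (t : ℕ) (S : Set (Idx r)) : Prop :=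
  ∀ a b : Idx r, hdist a b = 3 → hdistT t a b = 3 → a ∉ S ∨ b ∉ S

lemma Jhat_le_varIdeal (t : ℕ) (S : Set (Idx r)) (hS : IsCover t S) :
    Jhat k t ≤ VarIdeal k S := by
  rw [Jhat, Ideal.span_le]
  rintro p ⟨a, b, i, hd, hdT, hit, hne, rfl⟩
  have mono : ∀ a b : Idx r, hdist a b = 3 → hdistT t a b = 3 →
      X a * X b ∈ VarIdeal k S := by
    intro a b h1 h2
    rcases hS a b h1 h2 with h | h
    · exact Ideal.mul_mem_right _ _ ((X_mem_varIdeal_iff k S a).mpr h)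
    · exact Ideal.mul_mem_left _ _ ((X_mem_varIdeal_iff k S b).mpr h)
  have hd' : hdist (sw {i} a b) (sw {i} b a) = 3 := (hdist_sw i a b).trans hd
  have hdT' : hdistT t (sw {i} a b) (sw {i} b a) = 3 := (hdistT_sw t i a b).trans hdT
  exact Ideal.add_mem _ (mono a b hd hdT) (mono _ _ hd' hdT')

lemma cover_of_prime (h2 : (2 : k) ≠ 0) (t : ℕ) (P : Ideal (MvPolynomial (Idx r) k))
    [hP : P.IsPrime] (hle : Jhat k t ≤ P) : IsCover t {a : Idx r | X a ∉ P} := by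
  intro a b hd hdT
  have := hle (mul_mem_Jhat k h2 t a b hd hdT)
  rcases hP.mem_or_mem this with h | h
  · left; simpa using h
  · right; simpa using h

lemma varIdeal_setOf_le (P : Ideal (MvPolynomial (Idx r) k)) :
    VarIdeal k {a : Idx r | X a ∉ P} ≤ P := by
  rw [VarIdeal, Ideal.span_le]
  rintro p ⟨a, ha, rfl⟩
  simp only [Set.mem_setOf_eq, not_not] at ha
  exact ha

end Aux

/-- the minimal primes over `Ĵ^⟨t⟩` are the minimal ideals among the
variable ideals of sets in `M̂`. -/
theorem stmt17 (h2 : (2 : k) ≠ 0) (t : ℕ) :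
    ∀ P : Ideal (MvPolynomial (Idx r) k),
      P ∈ (Jhat k t).minimalPrimes ↔
        ∃ S : Set (Idx r),
          (∀ a b : Idx r, hdist a b = 3 → hdistT t a b = 3 → a ∉ S ∨ b ∉ S) ∧
          P = VarIdeal k S ∧
          ∀ T : Set (Idx r),
            (∀ a b : Idx r, hdist a b = 3 → hdistT t a b = 3 → a ∉ T ∨ b ∉ T) →
            VarIdeal k T ≤ VarIdeal k S → VarIdeal k T = VarIdeal k S := by
  classical
  intro P
  constructor
  · rintro ⟨⟨hP, hle⟩, hmin⟩
    haveI := hP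
    set S := {a : Idx r | X a ∉ P} with hS
    have hcov : IsCover t S := cover_of_prime k h2 t P hle
    have hJ : Jhat k t ≤ VarIdeal k S := Jhat_le_varIdeal k t S hcov
    have hVP : VarIdeal k S ≤ P := varIdeal_setOf_le k P
    have hPV : P ≤ VarIdeal k S := hmin ⟨varIdeal_isPrime k S, hJ⟩ hVP
    have hPeq : P = VarIdeal k S := le_antisymm hPV hVP
    refine ⟨S, hcov, hPeq, ?_⟩
    intro T hT hle'
    have hJT : Jhat k t ≤ VarIdeal k T := Jhat_le_varIdeal k t T hT
    have : P ≤ VarIdeal k T := hmin ⟨varIdeal_isPrime k T, hJT⟩ (hPeq ▸ hle')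
    exact le_antisymm hle' (hPeq ▸ this)
  · rintro ⟨S, hcov, rfl, hmin⟩
    refine ⟨⟨varIdeal_isPrime k S, Jhat_le_varIdeal k t S hcov⟩, ?_⟩
    rintro Q ⟨hQ, hleQ⟩ hQle
    haveI := hQ
    set T := {a : Idx r | X a ∉ Q} with hT
    have hcovT : IsCover t T := cover_of_prime k h2 t Q hleQ
    have hVT : VarIdeal k T ≤ Q := varIdeal_setOf_le k Q
    have hTle : VarIdeal k T ≤ VarIdeal k S := le_trans hVT hQle
    have : VarIdeal k T = VarIdeal k S := hmin T hcovT hTle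
    calc VarIdeal k S = VarIdeal k T := this.symm
      _ ≤ Q := hVT
end

section
/- A square-free monomial x_M = ∏_{a ∈ M} x_a (for a finite subset M of N) lies in the radical of J^{⟨t⟩} if and only if M is not contained in any t-signed subset of N. -/
open MvPolynomial Finset

variable {n : ℕ} {r : Fin n → ℕ}

variable (k : Type*) [Field k]

section AuxBasic

variable {S : Set (Idx r)} {a b d : Idx r} {m m' : ℕ} {c c' : ℕ → Idx r} {t : ℕ}

lemma sw_single (i : Fin n) (a b : Idx r) : sw {i} a b = Function.update a i (b i) := by
  funext j
  by_cases h : j = i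
  · subst h; simp [sw, Function.update_self]
  · simp [sw, h, Function.update_of_ne h]

lemma hdist_comm (a b : Idx r) : hdist a b = hdist b a := by
  unfold hdist; congr 1; ext j; simp [ne_comm]

lemma hdist_pair {a b : Idx r} {i j : Fin n} (hij : i ≠ j) (hi : a i ≠ b i) (hj : a j ≠ b j)
    (h : ∀ l, l ≠ i → l ≠ j → a l = b l) : hdist a b = 2 := by
  unfold hdist
  have hset : (Finset.univ.filter fun l => a l ≠ b l) = {i, j} := by
    ext l
    simp only [Finset.mem_filter, Finset.mem_univ, true_and, Finset.mem_insert,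
      Finset.mem_singleton]
    constructor
    · intro hl; by_contra hc; push_neg at hc; exact hl (h l hc.1 hc.2)
    · rintro (rfl | rfl) <;> assumption
  rw [hset, Finset.card_insert_of_notMem (by simpa using hij), Finset.card_singleton]

lemma hdist_pair1 {a b : Idx r} {j : Fin n} (hj : a j ≠ b j)
    (h : ∀ l, l ≠ j → a l = b l) : hdist a b = 1 := by
  unfold hdist
  have hset : (Finset.univ.filter fun l => a l ≠ b l) = {j} := by
    ext l
    simp only [Finset.mem_filter, Finset.mem_univ, true_and, Finset.mem_singleton]
    constructor
    · intro hl; by_contra hc; exact hl (h l hc)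
    · rintro rfl; exact hj
  rw [hset, Finset.card_singleton]

lemma hdist_one_elim {a b : Idx r} (h : hdist a b = 1) :
    ∃ j, a j ≠ b j ∧ ∀ l, l ≠ j → a l = b l := by
  unfold hdist at h
  obtain ⟨j, hj⟩ := Finset.card_eq_one.mp h
  refine ⟨j, ?_, ?_⟩
  · have : j ∈ Finset.univ.filter fun l => a l ≠ b l := hj ▸ Finset.mem_singleton_self j
    simpa using this
  · intro l hl; by_contra hne
    have : l ∈ Finset.univ.filter fun l => a l ≠ b l := by simpa using hne
    rw [hj, Finset.mem_singleton] at this; exact hl this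

lemma hdist_two_elim {a b : Idx r} {i : Fin n} (h : hdist a b = 2) (hi : a i ≠ b i) :
    ∃ j, j ≠ i ∧ a j ≠ b j ∧ ∀ l, l ≠ i → l ≠ j → a l = b l := by
  unfold hdist at h
  obtain ⟨u, v, huv, huvs⟩ := Finset.card_eq_two.mp h
  have hmem : ∀ l, a l ≠ b l ↔ l ∈ ({u, v} : Finset (Fin n)) := by
    intro l
    rw [← huvs]; simp
  have hiuv : i ∈ ({u, v} : Finset (Fin n)) := (hmem i).mp hi
  simp only [Finset.mem_insert, Finset.mem_singleton] at hiuv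
  rcases hiuv with rfl | rfl
  · refine ⟨v, fun hvu => huv hvu.symm, (hmem v).mpr (by simp), ?_⟩
    intro l hl1 hl2
    by_contra hne
    have := (hmem l).mp hne
    simp only [Finset.mem_insert, Finset.mem_singleton] at this
    tauto
  · refine ⟨u, fun huv' => huv huv', (hmem u).mpr (by simp), ?_⟩
    intro l hl1 hl2
    by_contra hne
    have := (hmem l).mp hne
    simp only [Finset.mem_insert, Finset.mem_singleton] at this
    tauto

lemma hdist_one_update {a : Idx r} {i : Fin n} {v : Fin (r i)} (h : v ≠ a i) :
    hdist a (Function.update a i v) = 1 := by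
  refine hdist_pair1 (j := i) ?_ ?_
  · rw [Function.update_self]; exact fun hh => h hh.symm
  · intro l hl; rw [Function.update_of_ne hl]

lemma IsPath.mem_of_le (h : IsPath S a b m c) {j : ℕ} (hj : j ≤ m) : c j ∈ S := h.2.2.1 j hj

lemma IsPath.left_mem (h : IsPath S a b m c) : a ∈ S := h.1 ▸ h.2.2.1 0 (Nat.zero_le m)

lemma IsPath.right_mem (h : IsPath S a b m c) : b ∈ S := h.2.1 ▸ h.2.2.1 m le_rfl

lemma isPath_refl (ha : a ∈ S) : IsPath S a a 0 (fun _ => a) :=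
  ⟨rfl, rfl, fun _ _ => ha, fun j hj => absurd hj (Nat.not_lt_zero j)⟩

lemma IsPath.reverse (h : IsPath S a b m c) : IsPath S b a m (fun j => c (m - j)) := by
  obtain ⟨h0, hm, hmem, hstep⟩ := h
  refine ⟨?_, ?_, fun j _ => hmem _ (Nat.sub_le m j), ?_⟩
  · show c (m - 0) = b; rw [Nat.sub_zero, hm]
  · show c (m - m) = a; rw [Nat.sub_self, h0]
  · intro j hj
    show hdist (c (m - j)) (c (m - (j + 1))) = 1
    have h1 : m - j = m - (j + 1) + 1 := by omega
    rw [h1, hdist_comm]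
    exact hstep _ (by omega)

lemma IsPath.trans' (h1 : IsPath S a b m c) (h2 : IsPath S b d m' c') :
    IsPath S a d (m + m') (fun j => if j ≤ m then c j else c' (j - m)) := by
  obtain ⟨h10, h1m, h1mem, h1step⟩ := h1
  obtain ⟨h20, h2m, h2mem, h2step⟩ := h2
  refine ⟨by simp [h10], ?_, ?_, ?_⟩
  · show (if m + m' ≤ m then c (m + m') else c' (m + m' - m)) = d
    by_cases h : m + m' ≤ m
    · have hm0 : m' = 0 := by omega
      rw [if_pos h, show m + m' = m by omega, h1m, ← h20]
      exact hm0 ▸ h2m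
    · rw [if_neg h, show m + m' - m = m' by omega]; exact h2m
  · intro j hj
    show (if j ≤ m then c j else c' (j - m)) ∈ S
    by_cases h : j ≤ m
    · rw [if_pos h]; exact h1mem j h
    · rw [if_neg h]; exact h2mem _ (by omega)
  · intro j hj
    by_cases hj1 : j + 1 ≤ m
    · show hdist (if j ≤ m then c j else c' (j - m)) (if j + 1 ≤ m then c (j + 1) else c' (j + 1 - m)) = 1
      rw [if_pos (by omega : j ≤ m), if_pos hj1]
      exact h1step j (by omega)
    · by_cases hj0 : j ≤ m
      · have hjm : j = m := by omega
        show hdist (if j ≤ m then c j else c' (j - m)) (if j + 1 ≤ m then c (j + 1) else c' (j + 1 - m)) = 1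
        rw [if_pos hj0, if_neg hj1, hjm, show m + 1 - m = 1 by omega, h1m, ← h20]
        exact h2step 0 (by omega)
      · show hdist (if j ≤ m then c j else c' (j - m)) (if j + 1 ≤ m then c (j + 1) else c' (j + 1 - m)) = 1
        rw [if_neg hj0, if_neg hj1, show j + 1 - m = (j - m) + 1 by omega]
        exact h2step (j - m) (by omega)

lemma IsPath.prefix (h : IsPath S a b m c) {j : ℕ} (hj : j ≤ m) : IsPath S a (c j) j c :=
  ⟨h.1, rfl, fun l hl => h.2.2.1 l (le_trans hl hj), fun l hl => h.2.2.2 l (lt_of_lt_of_le hl hj)⟩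

lemma connected_refl (ha : a ∈ S) : Connected S a a := ⟨0, _, isPath_refl ha⟩

lemma Connected.symm (h : Connected S a b) : Connected S b a := by
  obtain ⟨m, c, hp⟩ := h; exact ⟨m, _, hp.reverse⟩

lemma Connected.trans (h : Connected S a b) (h' : Connected S b d) : Connected S a d := by
  obtain ⟨m, c, hp⟩ := h; obtain ⟨m', c', hp'⟩ := h'
  exact ⟨m + m', _, hp.trans' hp'⟩

lemma Connected.left_mem (h : Connected S a b) : a ∈ S := by
  obtain ⟨m, c, hp⟩ := h; exact hp.left_mem

lemma Connected.right_mem (h : Connected S a b) : b ∈ S := by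
  obtain ⟨m, c, hp⟩ := h; exact hp.right_mem

lemma IsPath.connected_to (h : IsPath S a b m c) {j : ℕ} (hj : j ≤ m) :
    Connected S a (c j) := ⟨j, c, h.prefix hj⟩

lemma isPath_edge (ha : a ∈ S) (hb : b ∈ S) (h : hdist a b = 1) :
    IsPath S a b 1 (fun j => if j = 0 then a else b) := by
  refine ⟨rfl, rfl, ?_, ?_⟩
  · intro j _
    show (if j = 0 then a else b) ∈ S
    by_cases hj : j = 0
    · rw [if_pos hj]; exact ha
    · rw [if_neg hj]; exact hb
  · intro j hj
    have hj0 : j = 0 := by omega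
    subst hj0
    show hdist (if (0:ℕ) = 0 then a else b) (if (0:ℕ) + 1 = 0 then a else b) = 1
    norm_num
    exact h

lemma connected_edge (ha : a ∈ S) (hb : b ∈ S) (h : hdist a b = 1) : Connected S a b :=
  ⟨1, _, isPath_edge ha hb h⟩

lemma exists_change (h : IsPath S a b m c) {j : Fin n} (hab : a j ≠ b j) :
    ∃ l < m, c l j ≠ c (l + 1) j := by
  by_contra hc; push_neg at hc
  have key : ∀ l ≤ m, c 0 j = c l j := by
    intro l
    induction l with
    | zero => intro _; rfl
    | succ l ih => intro hl; rw [ih (by omega), hc l (by omega)]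
  exact hab (by rw [← h.1, ← h.2.1]; exact key m le_rfl)

end AuxBasic

section AuxPrime

variable {t : ℕ} {P : Ideal (MvPolynomial (Idx r) k)}

/-- The set of variables not in `P`. -/
def SP (P : Ideal (MvPolynomial (Idx r) k)) : Set (Idx r) := {a | X a ∉ P}

lemma mem_SP {a : Idx r} : a ∈ SP k P ↔ X a ∉ P := Iff.rfl

lemma rel_mem (hJP : Jt k t ≤ P) {a b : Idx r} {i : Fin n} (h2d : hdist a b = 2)
    (hit : (i : ℕ) < t) (hab : a i ≠ b i) :
    X a * X b + X (Function.update a i (b i)) * X (Function.update b i (a i)) ∈ P := by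
  have h1 : gperm k i a b ∈ Jt k t := Ideal.subset_span ⟨a, b, i, h2d, hit, hab, rfl⟩
  have h2 := hJP h1
  rwa [gperm, sw_single, sw_single] at h2

lemma switch_mem (hP : P.IsPrime) (hJP : Jt k t ≤ P) {a b : Idx r} {i : Fin n}
    (ha : X a ∉ P) (hb : X b ∉ P) (h2d : hdist a b = 2) (hit : (i : ℕ) < t)
    (hab : a i ≠ b i) :
    X (Function.update a i (b i)) ∉ P ∧ X (Function.update b i (a i)) ∉ P := by
  have hrel := rel_mem k hJP h2d hit hab
  have hmul : X a * X b ∉ P := fun hm => ((hP.mem_or_mem hm).elim ha hb)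
  have hmul2 : X (Function.update a i (b i)) * X (Function.update b i (a i)) ∉ P := by
    intro hm
    apply hmul
    have := P.sub_mem hrel hm
    simpa using this
  exact ⟨fun h => hmul2 (P.mul_mem_right _ h), fun h => hmul2 (P.mul_mem_left _ h)⟩

lemma update_mem_of_path (hP : P.IsPrime) (hJP : Jt k t ≤ P) {i : Fin n}
    (hit : (i : ℕ) < t) {v : Fin (r i)} :
    ∀ {m : ℕ} {c : ℕ → Idx r} {a b : Idx r}, IsPath (SP k P) a b m c →
      X (Function.update a i v) ∉ P → X (Function.update b i v) ∉ P := by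
  intro m
  induction m with
  | zero =>
    intro c a b h hv
    have hab : a = b := by rw [← h.1, h.2.1]
    rwa [← hab]
  | succ m ih =>
    intro c a b h hv
    have hpre : IsPath (SP k P) a (c m) m c := h.prefix (by omega)
    have hv' := ih hpre hv
    have hedge : hdist (c m) b = 1 := by
      have := h.2.2.2 m (by omega)
      rwa [h.2.1] at this
    obtain ⟨j, hj, hothers⟩ := hdist_one_elim hedge
    by_cases hji : j = i
    · subst hji
      have heq : Function.update (c m) j v = Function.update b j v := by
        funext l
        by_cases hl : l = j
        · subst hl; rw [Function.update_self, Function.update_self]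
        · rw [Function.update_of_ne hl, Function.update_of_ne hl]
          exact hothers l hl
      rwa [heq] at hv'
    · have hij : (c m) i = b i := hothers i (fun h' => hji h'.symm)
      by_cases hvc : v = (c m) i
      · have hbv : Function.update b i v = b := by
          rw [hvc, hij, Function.update_eq_self]
        rw [hbv]
        exact h.right_mem
      · have h2d : hdist (Function.update (c m) i v) b = 2 := by
          refine hdist_pair (i := i) (j := j) (fun h' => hji h'.symm) ?_ ?_ ?_
          · rw [Function.update_self, ← hij]; exact fun h' => hvc h'
          · rw [Function.update_of_ne hji]; exact hj
          · intro l hli hlj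
            rw [Function.update_of_ne hli]
            exact hothers l hlj
        have hsw := switch_mem k hP hJP hv' h.right_mem h2d hit
          (by rw [Function.update_self, ← hij]; exact hvc)
        have := hsw.2
        rwa [Function.update_self] at this

/-- Number of non-`i` edges along a walk. -/
def nie (i : Fin n) (m : ℕ) (c : ℕ → Idx r) : ℕ :=
  ((Finset.range m).filter (fun j => c j i = c (j + 1) i)).card

lemma keyG (hP : P.IsPrime) (hJP : Jt k t ≤ P) {i : Fin n} (hit : (i : ℕ) < t)
    {v w : Fin (r i)} (hvw : v ≠ w) :
    ∀ {m : ℕ} {c : ℕ → Idx r} {a b : Idx r}, IsPath (SP k P) a b m c →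
      X (Function.update a i v) ∉ P → X (Function.update a i w) ∉ P →
      X (Function.update a i v) * X (Function.update b i w)
        - ((-1 : MvPolynomial (Idx r) k)) ^ (nie i m c) * (X (Function.update a i w) * X (Function.update b i v)) ∈ P := by
  intro m
  induction m with
  | zero =>
    intro c a b h hv hw
    have hab : a = b := by rw [← h.1, h.2.1]
    subst hab
    have h0 : nie i 0 c = 0 := by simp [nie]
    have : X (Function.update a i v) * X (Function.update a i w)
        - ((-1 : MvPolynomial (Idx r) k)) ^ (nie i 0 c) * (X (Function.update a i w) * X (Function.update a i v))
        = (0 : MvPolynomial (Idx r) k) := by rw [h0]; ring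
    rw [this]; exact P.zero_mem
  | succ m ih =>
    intro c a b h hv hw
    have hpre : IsPath (SP k P) a (c m) m c := h.prefix (by omega)
    have hD' := ih hpre hv hw
    have hedge : hdist (c m) b = 1 := by
      have := h.2.2.2 m (by omega)
      rwa [h.2.1] at this
    have hcmb : c (m + 1) = b := h.2.1
    by_cases hcm : c m i = c (m + 1) i
    · -- non-i edge
      have hnie : nie i (m + 1) c = nie i m c + 1 := by
        rw [nie, Finset.range_add_one, Finset.filter_insert, if_pos hcm,
          Finset.card_insert_of_notMem (by simp)]
        rfl
      have hbi : (c m) i = b i := by rw [hcm, hcmb]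
      obtain ⟨j, hj, hothers⟩ := hdist_one_elim hedge
      have hji : j ≠ i := by
        intro h'
        subst h'
        exact hj hbi
      have h2d : hdist (Function.update (c m) i v) (Function.update b i w) = 2 := by
        refine hdist_pair (i := i) (j := j) (fun h' => hji h'.symm) ?_ ?_ ?_
        · rw [Function.update_self, Function.update_self]; exact hvw
        · rw [Function.update_of_ne hji, Function.update_of_ne hji]; exact hj
        · intro l hli hlj
          rw [Function.update_of_ne hli, Function.update_of_ne hli]
          exact hothers l hlj
      have hrel := rel_mem k hJP h2d hit (by rw [Function.update_self, Function.update_self]; exact hvw)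
      rw [Function.update_self, Function.update_self, Function.update_idem,
        Function.update_idem] at hrel
      -- hrel : X (upd (c m) i v) * X (upd b i w) + X (upd (c m) i w) * X (upd b i v) ∈ P
      have hb'w : X (Function.update (c m) i w) ∉ P := update_mem_of_path k hP hJP hit hpre hw
      have hkey : X (Function.update (c m) i w) *
            (X (Function.update a i v) * X (Function.update b i w)
              - ((-1 : MvPolynomial (Idx r) k)) ^ (nie i (m + 1) c) * (X (Function.update a i w) * X (Function.update b i v)))
          = X (Function.update b i w) *
              (X (Function.update a i v) * X (Function.update (c m) i w)
                - ((-1 : MvPolynomial (Idx r) k)) ^ (nie i m c) * (X (Function.update a i w) * X (Function.update (c m) i v)))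
            + ((-1 : MvPolynomial (Idx r) k)) ^ (nie i m c) * (X (Function.update a i w) *
              (X (Function.update (c m) i v) * X (Function.update b i w)
                + X (Function.update (c m) i w) * X (Function.update b i v))) := by
        rw [hnie]; ring
      have hmem : X (Function.update (c m) i w) *
            (X (Function.update a i v) * X (Function.update b i w)
              - ((-1 : MvPolynomial (Idx r) k)) ^ (nie i (m + 1) c) * (X (Function.update a i w) * X (Function.update b i v))) ∈ P := by
        rw [hkey]
        exact P.add_mem (P.mul_mem_left _ hD') (P.mul_mem_left _ (P.mul_mem_left _ hrel))
      exact (hP.mem_or_mem hmem).resolve_left hb'w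
    · -- i edge
      have hnie : nie i (m + 1) c = nie i m c := by
        rw [nie, Finset.range_add_one, Finset.filter_insert, if_neg hcm]
        rfl
      obtain ⟨j, hj, hothers⟩ := hdist_one_elim hedge
      have hji : j = i := by
        by_contra h'
        exact hcm (by rw [hcmb]; exact hothers i (fun h'' => h' h''.symm))
      subst hji
      have hupd : ∀ x : Fin (r j), Function.update (c m) j x = Function.update b j x := by
        intro x
        funext l
        by_cases hl : l = j
        · subst hl; rw [Function.update_self, Function.update_self]
        · rw [Function.update_of_ne hl, Function.update_of_ne hl]
          exact hothers l hl
      rw [hnie, ← hupd v, ← hupd w]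
      exact hD'

lemma two_notMem (h2 : (2 : k) ≠ 0) (hP : P.IsPrime) :
    (2 : MvPolynomial (Idx r) k) ∉ P := by
  intro h
  have hC : (C (2 : k) : MvPolynomial (Idx r) k) = 2 := by
    rw [map_ofNat]
  have h1 : (1 : MvPolynomial (Idx r) k) ∈ P := by
    have hm := P.mul_mem_left (C (2⁻¹ : k)) (hC ▸ h)
    rwa [← C_mul, inv_mul_cancel₀ h2, C_1] at hm
  exact hP.ne_top ((Ideal.eq_top_iff_one P).mpr h1)

lemma three_val_contra (h2 : (2 : k) ≠ 0) (hP : P.IsPrime) (hJP : Jt k t ≤ P) {i : Fin n}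
    (hit : (i : ℕ) < t) {e₁ e₂ : Idx r} (hedge : hdist e₁ e₂ = 1) (hei : e₁ i = e₂ i)
    {x₁ x₂ x₃ : Fin (r i)} (h12 : x₁ ≠ x₂) (h13 : x₁ ≠ x₃) (h23 : x₂ ≠ x₃)
    (hc3 : X (Function.update e₁ i x₃) ∉ P)
    (hd1 : X (Function.update e₂ i x₁) ∉ P) (hd2 : X (Function.update e₂ i x₂) ∉ P) :
    False := by
  obtain ⟨j, hj, hothers⟩ := hdist_one_elim hedge
  have hji : j ≠ i := fun h' => hj (h' ▸ hei)
  have R : ∀ x y : Fin (r i), x ≠ y →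
      X (Function.update e₁ i x) * X (Function.update e₂ i y)
        + X (Function.update e₁ i y) * X (Function.update e₂ i x) ∈ P := by
    intro x y hxy
    have h2d : hdist (Function.update e₁ i x) (Function.update e₂ i y) = 2 := by
      refine hdist_pair (i := i) (j := j) (fun h' => hji h'.symm) ?_ ?_ ?_
      · rw [Function.update_self, Function.update_self]; exact hxy
      · rw [Function.update_of_ne hji, Function.update_of_ne hji]; exact hj
      · intro l hli hlj
        rw [Function.update_of_ne hli, Function.update_of_ne hli]
        exact hothers l hlj
    have := rel_mem k hJP h2d hit (by rw [Function.update_self, Function.update_self]; exact hxy)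
    rwa [Function.update_self, Function.update_self, Function.update_idem,
      Function.update_idem] at this
  have hcomb : (2 : MvPolynomial (Idx r) k) *
        (X (Function.update e₁ i x₃) * (X (Function.update e₂ i x₁) * X (Function.update e₂ i x₂)))
      = X (Function.update e₂ i x₁) *
          (X (Function.update e₁ i x₂) * X (Function.update e₂ i x₃)
            + X (Function.update e₁ i x₃) * X (Function.update e₂ i x₂))
        + X (Function.update e₂ i x₂) *
          (X (Function.update e₁ i x₁) * X (Function.update e₂ i x₃)
            + X (Function.update e₁ i x₃) * X (Function.update e₂ i x₁))
        - X (Function.update e₂ i x₃) *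
          (X (Function.update e₁ i x₁) * X (Function.update e₂ i x₂)
            + X (Function.update e₁ i x₂) * X (Function.update e₂ i x₁)) := by
    ring
  have hm : (2 : MvPolynomial (Idx r) k) *
        (X (Function.update e₁ i x₃) * (X (Function.update e₂ i x₁) * X (Function.update e₂ i x₂))) ∈ P := by
    rw [hcomb]
    exact P.sub_mem (P.add_mem (P.mul_mem_left _ (R x₂ x₃ h23)) (P.mul_mem_left _ (R x₁ x₃ h13)))
      (P.mul_mem_left _ (R x₁ x₂ h12))
  rcases hP.mem_or_mem hm with h | h
  · exact two_notMem k h2 hP h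
  rcases hP.mem_or_mem h with h | h
  · exact hc3 h
  rcases hP.mem_or_mem h with h | h
  · exact hd1 h
  · exact hd2 h

end AuxPrime

section AuxTrichotomy

variable {t : ℕ} {P : Ideal (MvPolynomial (Idx r) k)}

lemma even_changes {L : ℕ} {W : ℕ → Idx r} {i : Fin n} {p q : Fin (r i)}
    (hval : ∀ l ≤ L, W l i = p ∨ W l i = q) (hclosed : W L i = W 0 i) :
    Even (((Finset.range L).filter fun l => ¬ W l i = W (l + 1) i).card) := by
  have key : ((((Finset.range L).filter fun l => ¬ W l i = W (l + 1) i).card : ℕ) : ZMod 2) = 0 := by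
    rw [Finset.card_filter]
    push_cast
    have hcong : ∀ l ∈ Finset.range L,
        (if ¬ W l i = W (l + 1) i then (1 : ZMod 2) else 0)
          = (fun l => if W l i = p then (0 : ZMod 2) else 1) (l + 1)
            - (fun l => if W l i = p then (0 : ZMod 2) else 1) l := by
      intro l hl
      rw [Finset.mem_range] at hl
      simp only
      by_cases hA : W l i = p <;> by_cases hB : W (l + 1) i = p
      · rw [if_neg (not_not_intro (hA.trans hB.symm)), if_pos hA, if_pos hB, sub_zero]
      · rw [if_pos (fun h' => hB (by rw [← h']; exact hA)), if_pos hA, if_neg hB, sub_zero]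
      · rw [if_pos (fun h' => hA (by rw [h']; exact hB)), if_neg hA, if_pos hB]
        decide
      · have h1 : W l i = q := (hval l (by omega)).resolve_left hA
        have h2 : W (l + 1) i = q := (hval (l + 1) (by omega)).resolve_left hB
        rw [if_neg (not_not_intro (h1.trans h2.symm)), if_neg hA, if_neg hB, sub_self]
    rw [Finset.sum_congr rfl hcong,
      Finset.sum_range_sub (fun l => if W l i = p then (0 : ZMod 2) else 1)]
    rw [hclosed]
    exact sub_self _
  have hdvd := (ZMod.natCast_eq_zero_iff _ 2).mp key
  exact even_iff_two_dvd.mpr hdvd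

lemma signed_of_prime (h2 : (2 : k) ≠ 0) (hP : P.IsPrime) (hJP : Jt k t ≤ P) :
    Signed t (SP k P) := by
  constructor
  · -- Switchable
    intro a ha b hb hd i hit
    rw [sw_single, sw_single]
    by_cases hab : a i = b i
    · constructor
      · rw [← hab, Function.update_eq_self]; exact ha
      · rw [hab, Function.update_eq_self]; exact hb
    · exact switch_mem k hP hJP ha hb hd hit hab
  · intro a ha
    by_contra hcon
    push_neg at hcon
    obtain ⟨hn1, hn2, hn3⟩ := hcon
    obtain ⟨b₀, c₀, hb₀, hc₀, i₀, hi₀t, hne₀⟩ := hn1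
    obtain ⟨u₁, u₂, hu₁, hu₂, hdu⟩ := hn2
    obtain ⟨bb, cc, hbb, hcc, m, m', pp, pp', hp, hp', hmm⟩ := hn3
    -- odd closed walk at bb
    have hw : IsPath (SP k P) bb bb (m + m')
        (fun j => if j ≤ m then pp j else (fun j' => pp' (m' - j')) (j - m)) :=
      hp.trans' hp'.reverse
    set L := m + m' with hL
    set W : ℕ → Idx r := fun j => if j ≤ m then pp j else (fun j' => pp' (m' - j')) (j - m) with hW
    have hoddL : L % 2 = 1 := by omega
    -- memberships of the two reference updates at bb
    have hupd_mem : ∀ z : Idx r, Connected (SP k P) a z →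
        ∀ l ≤ L, X (Function.update z i₀ (W l i₀)) ∉ P := by
      intro z hz l hl
      have hWl : Connected (SP k P) a (W l) := hbb.trans (hw.connected_to hl)
      have hconn : Connected (SP k P) (W l) z := hWl.symm.trans hz
      obtain ⟨mz, cz, hpz⟩ := hconn
      exact update_mem_of_path k hP hJP hi₀t hpz
        (by rw [Function.update_eq_self]; exact hpz.left_mem)
    have hupd_mem' : ∀ z : Idx r, Connected (SP k P) a z → ∀ x : Idx r,
        Connected (SP k P) a x → X (Function.update z i₀ (x i₀)) ∉ P := by
      intro z hz x hx
      have hconn : Connected (SP k P) x z := hx.symm.trans hz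
      obtain ⟨mz, cz, hpz⟩ := hconn
      exact update_mem_of_path k hP hJP hi₀t hpz
        (by rw [Function.update_eq_self]; exact hpz.left_mem)
    have hbbp : X (Function.update bb i₀ (b₀ i₀)) ∉ P := hupd_mem' bb hbb b₀ hb₀
    have hbbq : X (Function.update bb i₀ (c₀ i₀)) ∉ P := hupd_mem' bb hbb c₀ hc₀
    -- non-i₀ edge count along W is even
    have hnieEven : ¬ Odd (nie i₀ L W) := by
      intro ho
      have hD := keyG k hP hJP hi₀t hne₀ hw hbbp hbbq
      rw [ho.neg_one_pow] at hD
      have heq : X (Function.update bb i₀ (b₀ i₀)) * X (Function.update bb i₀ (c₀ i₀))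
          - (-1 : MvPolynomial (Idx r) k) * (X (Function.update bb i₀ (c₀ i₀)) * X (Function.update bb i₀ (b₀ i₀)))
          = (2 : MvPolynomial (Idx r) k) * (X (Function.update bb i₀ (b₀ i₀)) * X (Function.update bb i₀ (c₀ i₀))) := by
        ring
      rw [heq] at hD
      rcases hP.mem_or_mem hD with h | h
      · exact two_notMem k h2 hP h
      rcases hP.mem_or_mem h with h | h
      · exact hbbp h
      · exact hbbq h
    -- hence the number of i₀-changes is odd
    have hsplit : nie i₀ L W
        + (((Finset.range L).filter fun l => ¬ W l i₀ = W (l + 1) i₀).card) = L := by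
      rw [nie]
      rw [Finset.card_filter_add_card_filter_not]
      exact Finset.card_range L
    have hchOdd : (((Finset.range L).filter fun l => ¬ W l i₀ = W (l + 1) i₀).card) % 2 = 1 := by
      rw [Nat.odd_iff] at hnieEven
      omega
    have hclosed : W L i₀ = W 0 i₀ := by rw [hw.2.1, hw.1]
    -- three distinct values at coordinate i₀
    by_cases h3 : ∃ l₁ ≤ L, ∃ l₂ ≤ L, W l₁ i₀ ≠ W 0 i₀ ∧ W l₂ i₀ ≠ W 0 i₀ ∧ W l₁ i₀ ≠ W l₂ i₀
    · obtain ⟨l₁, hl₁, l₂, hl₂, hx1, hx2, hx12⟩ := h3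
      -- find a non-i₀ edge in the class
      have hj' : ∃ j, j ≠ i₀ ∧ u₁ j ≠ u₂ j := by
        have h2le : 1 < (Finset.univ.filter fun l => u₁ l ≠ u₂ l).card := hdu
        obtain ⟨j₁, hj₁, j₂, hj₂, hjj⟩ := Finset.one_lt_card.mp h2le
        simp only [Finset.mem_filter, Finset.mem_univ, true_and] at hj₁ hj₂
        by_cases h' : j₁ = i₀
        · exact ⟨j₂, by rw [← h']; exact fun h'' => hjj h''.symm, hj₂⟩
        · exact ⟨j₁, h', hj₁⟩
      obtain ⟨j, hji₀, hujj⟩ := hj'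
      obtain ⟨mu, cu, hpu⟩ := hu₁.symm.trans hu₂
      obtain ⟨le, hle, hch⟩ := exists_change hpu hujj
      have hedge : hdist (cu le) (cu (le + 1)) = 1 := hpu.2.2.2 le hle
      have hei : cu le i₀ = cu (le + 1) i₀ := by
        obtain ⟨j', hj'', hothers⟩ := hdist_one_elim hedge
        have hj'j : j' = j := by
          by_contra h'
          exact hch (hothers j (fun h'' => h' h''.symm))
        subst hj'j
        exact hothers i₀ (fun h' => hji₀ h'.symm)
      have hconn_e₁ : Connected (SP k P) a (cu le) := hu₁.trans (hpu.connected_to (by omega))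
      have hconn_e₂ : Connected (SP k P) a (cu (le + 1)) := hu₁.trans (hpu.connected_to (by omega))
      have hm1 : X (Function.update (cu (le + 1)) i₀ (W 0 i₀)) ∉ P :=
        hupd_mem _ hconn_e₂ 0 (by omega)
      have hm2 : X (Function.update (cu (le + 1)) i₀ (W l₁ i₀)) ∉ P :=
        hupd_mem _ hconn_e₂ l₁ hl₁
      have hm3 : X (Function.update (cu le) i₀ (W l₂ i₀)) ∉ P :=
        hupd_mem _ hconn_e₁ l₂ hl₂
      exact three_val_contra k h2 hP hJP hi₀t hedge hei
        (fun h' => hx1 h'.symm) (fun h' => hx2 h'.symm) (fun h' => hx12 (h'.symm ▸ rfl))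
        hm3 hm1 hm2
    · push_neg at h3
      by_cases hex : ∃ l ≤ L, W l i₀ ≠ W 0 i₀
      · obtain ⟨lq, hlq, hq⟩ := hex
        have h2v : ∀ l ≤ L, W l i₀ = W 0 i₀ ∨ W l i₀ = W lq i₀ := by
          intro l hl
          by_cases hh : W l i₀ = W 0 i₀
          · exact Or.inl hh
          · exact Or.inr (h3 l hl lq hlq hh hq)
        have hEv := even_changes h2v hclosed
        rw [Nat.even_iff] at hEv
        omega
      · push_neg at hex
        have h2v : ∀ l ≤ L, W l i₀ = W 0 i₀ ∨ W l i₀ = W 0 i₀ := by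
          intro l hl; exact Or.inl (hex l hl)
        have hEv := even_changes h2v hclosed
        rw [Nat.even_iff] at hEv
        omega

end AuxTrichotomy

section AuxEasy

variable {t : ℕ} {S : Set (Idx r)}

/-- Equivalence relation: equality or connectedness. -/
def connSetoid (S : Set (Idx r)) : Setoid (Idx r) where
  r x y := x = y ∨ Connected S x y
  iseqv := by
    refine ⟨fun x => Or.inl rfl, ?_, ?_⟩
    · rintro x y (rfl | h)
      · exact Or.inl rfl
      · exact Or.inr h.symm
    · rintro x y z (rfl | h) (rfl | h')
      · exact Or.inl rfl
      · exact Or.inr h'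
      · exact Or.inr h
      · exact Or.inr (h.trans h')

/-- A representative of the connectedness class. -/
noncomputable def crep (S : Set (Idx r)) (x : Idx r) : Idx r :=
  (Quotient.mk (connSetoid S) x).out

lemma crep_rel (S : Set (Idx r)) (x : Idx r) :
    crep S x = x ∨ Connected S (crep S x) x :=
  Quotient.exact (Quotient.out_eq (Quotient.mk (connSetoid S) x))

lemma crep_eq_of_conn {x y : Idx r} (h : Connected S x y) : crep S x = crep S y := by
  unfold crep
  rw [Quotient.sound (Or.inr h : (connSetoid S).r x y)]

lemma crep_conn {x : Idx r} (hx : x ∈ S) : Connected S (crep S x) x := by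
  rcases crep_rel S x with h | h
  · rw [h]; exact connected_refl hx
  · exact h

lemma pl_spec {a b : Idx r} (h : Connected S a b) : ∃ c, IsPath S a b (pl S a b) c := by
  obtain ⟨m, c, hp⟩ := h
  have hne : {m | ∃ c, IsPath S a b m c}.Nonempty := ⟨m, c, hp⟩
  exact Nat.sInf_mem hne

/-- Conditions from the definition of `Signed`. -/
def Cond1 (t : ℕ) (S : Set (Idx r)) (a : Idx r) : Prop :=
  ∀ b c, Connected S a b → Connected S a c → ∀ i : Fin n, (i : ℕ) < t → b i = c i

def Cond2 (S : Set (Idx r)) (a : Idx r) : Prop :=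
  ∀ b c, Connected S a b → Connected S a c → hdist b c ≤ 1

def Cond3 (S : Set (Idx r)) (a : Idx r) : Prop :=
  ∀ b c, Connected S a b → Connected S a c →
    ∀ m m' p p', IsPath S b c m p → IsPath S b c m' p' → m % 2 = m' % 2

open Classical in
/-- The evaluation point attached to a signed set. -/
noncomputable def eps (t : ℕ) (S : Set (Idx r)) {K : Type*} [Field K] (ι : K) : Idx r → K :=
  fun x => if x ∈ S then
      (if Cond1 t S x ∨ Cond2 S x then 1 else ι ^ (pl S (crep S x) x % 2))
    else 0

lemma eps_ne_zero {K : Type*} [Field K] {ι : K} (hι : ι ^ 2 = -1) {x : Idx r} (hx : x ∈ S) :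
    eps t S ι x ≠ 0 := by
  have hι0 : ι ≠ 0 := by
    intro h
    rw [h] at hι
    norm_num at hι
  unfold eps
  rw [if_pos hx]
  split
  · exact one_ne_zero
  · exact pow_ne_zero _ hι0

lemma eps_eq_zero {K : Type*} [Field K] {ι : K} {x : Idx r} (hx : x ∉ S) :
    eps t S ι x = 0 := by
  unfold eps; rw [if_neg hx]

lemma aeval_eps_gperm (hS : Signed t S) {K : Type*} [Field K] {ι : K} (hι : ι ^ 2 = -1)
    {a b : Idx r} {i : Fin n} (hd : hdist a b = 2) (hit : (i : ℕ) < t) (hab : a i ≠ b i) :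
    eps t S ι a * eps t S ι b
      + eps t S ι (Function.update a i (b i)) * eps t S ι (Function.update b i (a i)) = 0 := by
  obtain ⟨j, hjne, hj, hothers⟩ := hdist_two_elim hd hab
  set s := Function.update a i (b i) with hs
  set s' := Function.update b i (a i) with hs'
  have hsi : s i = b i := Function.update_self i (b i) a
  have hs'i : s' i = a i := Function.update_self i (a i) b
  have hsj : s j = a j := Function.update_of_ne hjne (b i) a
  have hs'j : s' j = b j := Function.update_of_ne hjne (a i) b
  have hsl : ∀ l, l ≠ i → s l = a l := fun l hl => Function.update_of_ne hl (b i) a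
  have hs'l : ∀ l, l ≠ i → s' l = b l := fun l hl => Function.update_of_ne hl (a i) b
  have hdss' : hdist s s' = 2 := by
    refine hdist_pair (i := i) (j := j) (fun h' => hjne h'.symm) ?_ ?_ ?_
    · rw [hsi, hs'i]; exact fun h' => hab h'.symm
    · rw [hsj, hs'j]; exact hj
    · intro l hli hlj
      rw [hsl l hli, hs'l l hli]
      exact hothers l hli hlj
  by_cases hmem : a ∈ S ∧ b ∈ S
  · obtain ⟨ha, hb⟩ := hmem
    -- switches are in S
    have hsw := hS.1 a ha b hb hd i hit
    rw [sw_single, sw_single, ← hs, ← hs'] at hsw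
    obtain ⟨hsS, hs'S⟩ := hsw
    -- connectivity facts
    have hdas : hdist a s = 1 := by rw [hs]; exact hdist_one_update (fun h' => hab h'.symm)
    have hdsb : hdist s b = 1 := by
      refine hdist_pair1 (j := j) (by rw [hsj]; exact hj) ?_
      intro l hl
      by_cases hli : l = i
      · subst hli; exact hsi
      · rw [hsl l hli]; exact hothers l hli hl
    have hdbs' : hdist b s' = 1 := by rw [hs']; exact hdist_one_update hab
    have hcas : Connected S a s := connected_edge ha hsS hdas
    have hcsb : Connected S s b := connected_edge hsS hb hdsb
    have hcab : Connected S a b := hcas.trans hcsb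
    have hcbs' : Connected S b s' := connected_edge hb hs'S hdbs'
    have hcas' : Connected S a s' := hcab.trans hcbs'
    -- Cond1 and Cond2 fail at a, b, s, s'
    have hnc1 : ∀ x : Idx r, Connected S x a → Connected S x b → ¬ Cond1 t S x := by
      intro x hxa hxb hC
      exact hab (hC a b hxa hxb i hit)
    have hnc2 : ∀ x : Idx r, Connected S x a → Connected S x b → ¬ Cond2 S x := by
      intro x hxa hxb hC
      have := hC a b hxa hxb
      omega
    have hceps : ∀ x : Idx r, x ∈ S → Connected S x a → Connected S x b →
        eps t S ι x = ι ^ (pl S (crep S x) x % 2) := by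
      intro x hx hxa hxb
      unfold eps
      rw [if_pos hx, if_neg (by push_neg; exact ⟨hnc1 x hxa hxb, hnc2 x hxa hxb⟩)]
    -- all four reps agree
    have hrb : crep S b = crep S a := crep_eq_of_conn hcab.symm
    have hrs : crep S s = crep S a := crep_eq_of_conn hcas.symm
    have hrs' : crep S s' = crep S a := crep_eq_of_conn hcas'.symm
    set ρ := crep S a with hρ
    have hρa : Connected S ρ a := crep_conn ha
    -- Cond3 holds at a
    have hC3 : Cond3 S a := by
      rcases hS.2 a ha with h | h | h
      · exact absurd h (hnc1 a (connected_refl ha) hcab)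
      · exact absurd h (hnc2 a (connected_refl ha) hcab)
      · exact h
    -- parity is path-independent from ρ
    have hpar : ∀ x : Idx r, Connected S ρ x → ∀ mℓ cℓ, IsPath S ρ x mℓ cℓ →
        mℓ % 2 = pl S ρ x % 2 := by
      intro x hρx mℓ cℓ hpℓ
      obtain ⟨cmin, hcmin⟩ := pl_spec hρx
      exact hC3 ρ x hρa.symm (hρa.symm.trans hρx) mℓ (pl S ρ x) cℓ cmin hpℓ hcmin
    obtain ⟨c₀, hc₀⟩ := pl_spec hρa
    set pa := pl S ρ a with hpa
    -- parities of the four points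
    have hparb : pl S ρ b % 2 = pa % 2 := by
      have hpath := (hc₀.trans' (isPath_edge ha hsS hdas)).trans' (isPath_edge hsS hb hdsb)
      have := hpar b (hρa.trans hcab) _ _ hpath
      omega
    have hpars : pl S ρ s % 2 = (pa + 1) % 2 := by
      have hpath := hc₀.trans' (isPath_edge ha hsS hdas)
      have := hpar s (hρa.trans hcas) _ _ hpath
      omega
    have hpars' : pl S ρ s' % 2 = (pa + 1) % 2 := by
      have hpath := (hc₀.trans' (isPath_edge ha hsS hdas)).trans'
        ((isPath_edge hsS hb hdsb).trans' (isPath_edge hb hs'S hdbs'))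
      have := hpar s' (hρa.trans hcas') _ _ hpath
      omega
    rw [hceps a ha (connected_refl ha) hcab,
      hceps b hb hcab.symm (connected_refl hb),
      hceps s hsS hcas.symm (hcsb),
      hceps s' hs'S hcas'.symm hcbs'.symm,
      hrb, hrs, hrs', ← hρ, ← hpa, hparb, hpars, hpars']
    rcases Nat.mod_two_eq_zero_or_one pa with h | h
    · rw [h, show (pa + 1) % 2 = 1 by omega, pow_zero, pow_one]
      linear_combination hι
    · rw [h, show (pa + 1) % 2 = 0 by omega, pow_zero, pow_one]
      linear_combination hι
  · -- one of a, b is outside S; then one of s, s' is outside S as well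
    have hss' : ¬ (s ∈ S ∧ s' ∈ S) := by
      rintro ⟨hsS, hs'S⟩
      apply hmem
      have hsw := hS.1 s hsS s' hs'S hdss' i hit
      rw [sw_single, sw_single] at hsw
      have h1 : Function.update s i (s' i) = a := by
        rw [hs'i, hs, Function.update_idem, Function.update_eq_self]
      have h2 : Function.update s' i (s i) = b := by
        rw [hsi, hs', Function.update_idem, Function.update_eq_self]
      rw [h1, h2] at hsw
      exact hsw
    have h1 : eps t S ι a * eps t S ι b = 0 := by
      rcases not_and_or.mp hmem with h | h
      · rw [eps_eq_zero h, zero_mul]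
      · rw [eps_eq_zero h, mul_zero]
    have h2 : eps t S ι s * eps t S ι s' = 0 := by
      rcases not_and_or.mp hss' with h | h
      · rw [eps_eq_zero h, zero_mul]
      · rw [eps_eq_zero h, mul_zero]
    rw [h1, h2, add_zero]

lemma notMem_radical (hS : Signed t S) {M : Finset (Idx r)} (hMS : ↑M ⊆ S) :
    (∏ a ∈ M, X a : MvPolynomial (Idx r) k) ∉ (Jt k t).radical := by
  intro hmem
  obtain ⟨ι, hι⟩ := IsAlgClosed.exists_pow_nat_eq (-1 : AlgebraicClosure k) zero_lt_two
  set Φ : MvPolynomial (Idx r) k →ₐ[k] AlgebraicClosure k :=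
    MvPolynomial.aeval (eps t S ι) with hΦ
  have hker : Jt k t ≤ RingHom.ker Φ.toRingHom := by
    rw [Jt, Ideal.span_le]
    rintro p ⟨a, b, i, hd, hit, hab, rfl⟩
    show Φ (gperm k i a b) = 0
    rw [gperm, map_add, map_mul, map_mul, hΦ]
    simp only [MvPolynomial.aeval_X]
    rw [sw_single, sw_single]
    exact aeval_eps_gperm hS hι hd hit hab
  obtain ⟨nn, hn⟩ := Ideal.mem_radical_iff.mp hmem
  have hzero : Φ ((∏ a ∈ M, X a : MvPolynomial (Idx r) k) ^ nn) = 0 := hker hn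
  rw [map_pow] at hzero
  have hΦprod : Φ (∏ a ∈ M, X a) = ∏ a ∈ M, eps t S ι a := by
    rw [map_prod]
    exact Finset.prod_congr rfl (fun a _ => MvPolynomial.aeval_X _ a)
  rw [hΦprod] at hzero
  have hne : (∏ a ∈ M, eps t S ι a) ≠ 0 :=
    Finset.prod_ne_zero_iff.mpr (fun a ha => eps_ne_zero hι (hMS ha))
  exact hne (pow_eq_zero_iff'.mp hzero).1


/-- a square-free monomial lies in the radical of `J^⟨t⟩` iff its support
is contained in no `t`-signed set. -/
theorem stmt18 (h2 : (2 : k) ≠ 0) (t : ℕ) (M : Finset (Idx r)) :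
    (∏ a ∈ M, X a : MvPolynomial (Idx r) k) ∈ (Jt k t).radical ↔
      ∀ S : Set (Idx r), Signed t S → ¬ (↑M : Set (Idx r)) ⊆ S := by
  constructor
  · intro hrad S hS hsub
    exact notMem_radical k hS hsub hrad
  · intro hall
    by_contra hrad
    rw [Ideal.radical_eq_sInf, Submodule.mem_sInf] at hrad
    push_neg at hrad
    obtain ⟨P, ⟨hle, hprime⟩, hxP⟩ := hrad
    refine hall (SP k P) (signed_of_prime k h2 hprime hle) ?_
    intro a haM
    show X a ∉ P
    intro hXa
    apply hxP
    have hprod : (∏ b ∈ M, X b : MvPolynomial (Idx r) k) = X a * ∏ b ∈ M.erase a, X b :=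
      (Finset.mul_prod_erase M X (by simpa using haM)).symm
    rw [hprod]
    exact Ideal.mul_mem_right _ P hXa
end AuxEasy
end
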